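/- Let K be a field, A the free K-module on PRT', and B the free K-module on PRT' × PRT'. Let Δ : A → B be the K-linear map with Δ(T) = Σ_{I ⊆ L(T)} (T|I, T|I^c) for every T ∈ PRT'. Extend, for each m ≥ 2, the m-ary operation gr (where gr : lists of elements of PRT' → PRT' deletes all entries equal to 1 and then returns 1 if no entries remain, the unique entry if exactly one remains, and the grafting node of the remaining entries otherwise) K-multilinearly to A, and extend it componentwise and K-multilinearly to B. Then: (i) Δ(1) = (1,1) and Δ(x) = (x,1) + (1,x); (ii) for every m ≥ 2 and all f_1,…,f_m ∈ A, Δ(gr(f_1,…,f_m)) = gr(Δ(f_1),…,Δ(f_m)); and (iii) for every f ∈ A and all V, W ∈ PRT', c_{V,W}(Δ(f)) = Σ_{T ∈ PRT'} c_T(f)·#N_{V,W}(T), where c_T and c_{V,W} denote the coordinate functionals of the free modules A and B. -/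

import Mathlib

inductive PTree : Type where
  | node : List PTree → PTree

namespace PTree

/-- the single-vertex tree -/
def x : PTree := node []

/-- the number of leaves of a tree -/
def deg : PTree → ℕ
  | node l => max 1 (l.attach.map fun t => deg t.1).sum
decreasing_by
  have := List.sizeOf_lt_of_mem t.2
  simp; omega

/-- a tree is reduced if no vertex has arity 1 -/
inductive Reduced : PTree → Prop where
  | node (l : List PTree) (hlen : l.length ≠ 1) (h : ∀ t ∈ l, Reduced t) :
      Reduced (node l)

/-- the reduction of a tree -/
def red : PTree → PTree
  | node [t] => red t
  | node l => node (l.attach.map fun t => red t.1)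
decreasing_by
  · simp; omega
  · have := List.sizeOf_lt_of_mem t.2
    simp; omega

mutual
/-- the spanning subtree `T_I` determined by a set `I ⊆ range (deg T)` of leaf positions
(counted from the left, starting at `0`) -/
def sub : PTree → Finset ℕ → PTree
  | node l, I => node (subList l I)
/-- auxiliary: the list of spanning subtrees of the children, children without
selected leaves being dropped -/
def subList : List PTree → Finset ℕ → List PTree
  | [], _ => []
  | t :: ts, I =>
      (if (I.filter (· < t.deg)).Nonempty then [sub t (I.filter (· < t.deg))] else [])
        ++ subList ts ((I.filter fun j => t.deg ≤ j).image fun j => j - t.deg)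
end

/-- the contraction `T|I`: the reduction of the spanning subtree, `1` (i.e. `none`) if `I = ∅` -/
def contract (T : PTree) (I : Finset ℕ) : Option PTree :=
  if I = ∅ then none else some (red (sub T I))

end PTree

/-- `PRT'`: finite planar rooted trees together with the empty tree `1 = none` -/
abbrev OT := Option PTree

/-- `deg` on `PRT'` -/
def degO (o : OT) : ℕ := o.elim 0 PTree.deg

/-- membership in `PRT'` = reduced trees together with the empty tree `1` -/
def ROT (o : OT) : Prop := ∀ t, o = some t → t.Reduced

/-- contraction on `PRT'` -/
def contractO : OT → Finset ℕ → OT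
  | none, _ => none
  | some t, I => PTree.contract t I

open Classical in
/-- `N_{S,T}(V)` as a finite set of subsets of the set of leaf positions of `V` -/
noncomputable def NFinset (S T V : OT) : Finset (Finset ℕ) :=
  (Finset.range (degO V)).powerset.filter fun I =>
    contractO V I = S ∧ contractO V (Finset.range (degO V) \ I) = T

/-- `#N_{S,T}(V)` -/
noncomputable def Ncount (S T V : OT) : ℕ := (NFinset S T V).card

/-- the free `K`-module on `PRT'` (realized inside the free module on all of `Option PTree`;
the elements of the free module on `PRT'` are those whose support satisfies `ROT`) -/
abbrev AMod (K : Type) [Field K] := OT →₀ K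

/-- `f` belongs to the free `K`-module on `PRT'` -/
def suppRed (K : Type) [Field K] (f : AMod K) : Prop := ∀ t ∈ f.support, ROT t

/-- the planar shuffle product `S ⧢ T = Σ_{V ∈ PRT'} #N_{S,T}(V)·V` of two monomials -/
noncomputable def shuffleM (K : Type) [Field K] (S T : OT) : AMod K :=
  ∑ᶠ (V : OT) (_ : ROT V), Finsupp.single V ((Ncount S T V : K))

/-- the `K`-bilinear extension of the planar shuffle product -/
noncomputable def shuffleF (K : Type) [Field K] (f g : AMod K) : AMod K :=
  f.sum fun S a => g.sum fun T b => (a * b) • shuffleM K S T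

/-- tensor-like product of a list of module elements, as a finitely supported
function on lists of basis elements -/
noncomputable def listProd (K : Type) [Field K] {σ : Type} : List (σ →₀ K) → (List σ →₀ K)
  | [] => Finsupp.single [] 1
  | f :: fs => f.sum fun t a => (listProd K fs).sum fun ts b => Finsupp.single (t :: ts) (a * b)

/-- the `K`-multilinear extension of an operation on basis elements -/
noncomputable def mulExt (K : Type) [Field K] {σ τ : Type} (op : List σ → τ)
    (l : List (σ →₀ K)) : τ →₀ K :=
  (listProd K l).sum fun ts c => Finsupp.single (op ts) c

/-- `gr` : delete all entries equal to `1`, then return `1` if no entry remains,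
the unique entry if exactly one remains, and the grafting `node` otherwise -/
def grO (ts : List OT) : OT :=
  match ts.reduceOption with
  | [] => none
  | [t] => some t
  | l => some (PTree.node l)

/-- the `K`-multilinear extension of `gr` -/
noncomputable def grF (K : Type) [Field K] (l : List (AMod K)) : AMod K := mulExt K grO l

/-- the `K`-multilinear extension of the grafting `node` (junk value `0` on lists
containing the empty tree `1`, which never occurs in its uses here) -/
noncomputable def nodeF (K : Type) [Field K] (l : List (AMod K)) : AMod K :=
  (listProd K l).sum fun ts c =>
    match (ts.mapM (id : Option PTree → Option PTree) : Option (List PTree)) with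
    | some l' => Finsupp.single (some (PTree.node l')) c
    | none => 0

/-- the free `K`-module on `PRT' × PRT'` (realized inside the free module on all pairs) -/
abbrev BMod (K : Type) [Field K] := (OT × OT) →₀ K

/-- the co-addition on a monomial: `Δ(T) = Σ_{I ⊆ L(T)} (T|I, T|I^c)` -/
noncomputable def DeltaM (K : Type) [Field K] (T : OT) : BMod K :=
  ∑ I ∈ (Finset.range (degO T)).powerset,
    Finsupp.single (contractO T I, contractO T (Finset.range (degO T) \ I)) 1

/-- the co-addition, extended `K`-linearly -/
noncomputable def Delta (K : Type) [Field K] (f : AMod K) : BMod K :=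
  f.sum fun T a => a • DeltaM K T

/-- componentwise `gr` on pairs of basis elements -/
def grPair (ps : List (OT × OT)) : OT × OT :=
  (grO (ps.map Prod.fst), grO (ps.map Prod.snd))

/-- the `K`-multilinear componentwise extension of `gr` to `B` -/
noncomputable def grB (K : Type) [Field K] (l : List (BMod K)) : BMod K := mulExt K grPair l

open PTree Finset

lemma deg_node (l : List PTree) : (PTree.node l).deg = max 1 (l.map PTree.deg).sum := by
  rw [PTree.deg]; congr 1; simp

lemma red_node_single (t : PTree) : (PTree.node [t]).red = t.red := by
  rw [PTree.red]

lemma red_node_ne_one (l : List PTree) (h : l.length ≠ 1) :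
    (PTree.node l).red = PTree.node (l.map PTree.red) := by
  rw [PTree.red.eq_def]
  match l, h with
  | [], _ => simp
  | [t], h => simp at h
  | t :: t' :: ts, _ => simp

lemma sub_node (l : List PTree) (I : Finset ℕ) :
    (PTree.node l).sub I = PTree.node (PTree.subList l I) := by
  rw [PTree.sub]

lemma subList_nil (I : Finset ℕ) : PTree.subList [] I = [] := by rw [PTree.subList]

lemma subList_cons (t : PTree) (ts : List PTree) (I : Finset ℕ) :
    PTree.subList (t :: ts) I =
      (if (I.filter (· < t.deg)).Nonempty then [t.sub (I.filter (· < t.deg))] else [])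
        ++ PTree.subList ts ((I.filter fun j => t.deg ≤ j).image fun j => j - t.deg) := by
  rw [PTree.subList]

lemma deg_pos (t : PTree) : 1 ≤ t.deg := by
  cases t with | node l => rw [deg_node]; omega

-- degO facts
lemma degO_none : degO none = 0 := rfl
lemma degO_some (t : PTree) : degO (some t) = t.deg := rfl

lemma filter_lt_zero (I : Finset ℕ) : I.filter (· < (0:ℕ)) = ∅ := by
  apply Finset.filter_eq_empty_iff.mpr; intro i _; omega

lemma shift_zero (I : Finset ℕ) : ((I.filter fun j => (0:ℕ) ≤ j).image fun j => j - 0) = I := by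
  simp

/-- list of contractions of entries of a list of trees along the split of `I` -/
def contractList : List OT → Finset ℕ → List OT
  | [], _ => []
  | t :: ts, I =>
      contractO t (I.filter (· < degO t)) ::
        contractList ts ((I.filter fun j => degO t ≤ j).image fun j => j - degO t)

/-- the list-level contraction on plain trees, with empties dropped -/
def cList : List PTree → Finset ℕ → List PTree
  | [], _ => []
  | t :: ts, I =>
      (if (I.filter (· < t.deg)).Nonempty then [(t.sub (I.filter (· < t.deg))).red] else [])
        ++ cList ts ((I.filter fun j => t.deg ≤ j).image fun j => j - t.deg)

lemma cList_eq_map_red (l : List PTree) (I : Finset ℕ) :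
    cList l I = (PTree.subList l I).map PTree.red := by
  induction l generalizing I with
  | nil => rw [cList, subList_nil]; rfl
  | cons t ts ih =>
      rw [cList, subList_cons, List.map_append, ih]
      congr 1
      split <;> simp

lemma contractList_reduceOption (ts : List OT) (I : Finset ℕ) :
    (contractList ts I).reduceOption = cList ts.reduceOption I := by
  induction ts generalizing I with
  | nil => rfl
  | cons t ts ih =>
      cases t with
      | none =>
          rw [contractList]
          rw [degO_none, filter_lt_zero, shift_zero]
          show (none :: contractList ts I).reduceOption = _
          rw [List.reduceOption_cons_of_none, ih]
          rfl
      | some t =>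
          rw [contractList]
          show (PTree.contract t (I.filter (· < t.deg)) ::
              contractList ts ((I.filter fun j => t.deg ≤ j).image fun j => j - t.deg)).reduceOption
            = cList (t :: ts.reduceOption) I
          rw [cList, PTree.contract]
          by_cases h : (I.filter (· < t.deg)).Nonempty
          · rw [if_pos h, if_neg (Finset.nonempty_iff_ne_empty.mp h),
              List.reduceOption_cons_of_some, ih]
            rfl
          · rw [if_neg h, if_pos (Finset.not_nonempty_iff_eq_empty.mp h),
              List.reduceOption_cons_of_none, ih]
            rfl

lemma degO_sum_eq (ts : List OT) :
    (ts.map degO).sum = (ts.reduceOption.map PTree.deg).sum := by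
  induction ts with
  | nil => rfl
  | cons t ts ih =>
      cases t with
      | none => simpa [degO_none] using ih
      | some t => simp [List.reduceOption_cons_of_some, ih]; rfl

lemma deg_node_of_ne_nil (l : List PTree) (h : l ≠ []) :
    (PTree.node l).deg = (l.map PTree.deg).sum := by
  rw [deg_node]
  have : 1 ≤ (l.map PTree.deg).sum := by
    cases l with
    | nil => exact absurd rfl h
    | cons t ts => simp only [List.map_cons, List.sum_cons]
                   have := deg_pos t; omega
  omega

lemma degO_grO (ts : List OT) : degO (grO ts) = (ts.map degO).sum := by
  rw [degO_sum_eq, grO]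
  match hl : ts.reduceOption with
  | [] => rfl
  | [t] => simp [degO_some]
  | t :: t' :: l =>
      show degO (some (PTree.node _)) = _
      rw [degO_some, deg_node_of_ne_nil _ (by simp)]

lemma subList_empty (l : List PTree) : PTree.subList l ∅ = [] := by
  induction l with
  | nil => exact subList_nil ∅
  | cons t ts ih => rw [subList_cons]; simp [ih]

lemma subList_ne_nil (l : List PTree) (I : Finset ℕ) (hne : I.Nonempty)
    (hI : I ⊆ Finset.range ((l.map PTree.deg).sum)) : PTree.subList l I ≠ [] := by
  induction l generalizing I with
  | nil => simp at hI; simp [hI] at hne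
  | cons t ts ih =>
      rw [subList_cons]
      by_cases h : (I.filter (· < t.deg)).Nonempty
      · simp [h]
      · rw [if_neg h]
        simp only [List.nil_append]
        have hfull : I.filter (fun j => t.deg ≤ j) = I := by
          rw [Finset.filter_eq_self]
          intro i hi
          by_contra hc
          exact h ⟨i, Finset.mem_filter.mpr ⟨hi, by omega⟩⟩
        apply ih
        · rw [hfull]; exact hne.image _
        · rw [hfull]
          intro i hi
          simp only [Finset.mem_image] at hi
          obtain ⟨j, hj, rfl⟩ := hi
          have hj2 := hI hj
          have hj3 : t.deg ≤ j := by
            by_contra hc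
            exact h ⟨j, Finset.mem_filter.mpr ⟨hj, by omega⟩⟩
          simp only [Finset.mem_range, List.map_cons, List.sum_cons] at hj2 ⊢
          omega

lemma grO_eq (ts : List OT) : grO ts = match ts.reduceOption with
    | [] => none
    | [t] => some t
    | l => some (PTree.node l) := rfl

lemma contractO_grO (ts : List OT) (I : Finset ℕ)
    (hI : I ⊆ Finset.range ((ts.map degO).sum)) :
    contractO (grO ts) I = grO (contractList ts I) := by
  have hred : (contractList ts I).reduceOption = (PTree.subList ts.reduceOption I).map PTree.red := by
    rw [contractList_reduceOption, cList_eq_map_red]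
  have hdeg : (ts.map degO).sum = (ts.reduceOption.map PTree.deg).sum := degO_sum_eq ts
  rw [grO_eq (contractList ts I), hred, grO_eq ts]
  match hr : ts.reduceOption with
  | [] =>
      rw [subList_nil]
      rfl
  | [t] =>
      have hflt : I.filter (· < t.deg) = I := by
        rw [Finset.filter_eq_self]
        intro i hi
        have := hI hi
        rw [hdeg, hr] at this
        simpa using this
      show PTree.contract t I = _
      rw [PTree.contract, subList_cons, subList_nil, hflt]
      by_cases h : I = ∅
      · rw [if_pos h, if_neg (by simp [h])]
        rfl
      · rw [if_neg h, if_pos (Finset.nonempty_iff_ne_empty.mpr h)]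
        rfl
  | t :: t' :: l =>
      show PTree.contract (PTree.node (t :: t' :: l)) I = _
      rw [PTree.contract]
      by_cases h : I = ∅
      · rw [if_pos h, h, subList_empty]
        rfl
      · rw [if_neg h, sub_node]
        have hne := subList_ne_nil (t :: t' :: l) I (Finset.nonempty_iff_ne_empty.mpr h)
          (by rw [← hr, ← hdeg]; exact hI)
        match hs : PTree.subList (t :: t' :: l) I with
        | [] => exact absurd hs hne
        | [u] =>
            rw [red_node_single]
            rfl
        | u :: u' :: rest =>
            rw [red_node_ne_one _ (by simp)]
            rfl

-- Finset splitting toolkit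
lemma flt_union (d : ℕ) (J J' : Finset ℕ) (hJ : J ⊆ range d) :
    (J ∪ J'.image (· + d)).filter (· < d) = J := by
  ext i; simp only [mem_filter, mem_union, mem_image]
  constructor
  · rintro ⟨h | ⟨a, _, rfl⟩, hlt⟩
    · exact h
    · omega
  · intro h; have := hJ h; simp at this; exact ⟨Or.inl h, this⟩

lemma fge_union (d : ℕ) (J J' : Finset ℕ) (hJ : J ⊆ range d) :
    ((J ∪ J'.image (· + d)).filter (d ≤ ·)).image (· - d) = J' := by
  ext i; simp only [mem_image, mem_filter, mem_union]
  constructor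
  · rintro ⟨j, ⟨h | ⟨a, ha, rfl⟩, hge⟩, rfl⟩
    · have := hJ h; simp at this; omega
    · simpa using ha
  · intro h; exact ⟨i + d, ⟨Or.inr ⟨i, h, rfl⟩, by omega⟩, by omega⟩

lemma union_subset_range (d s : ℕ) (J J' : Finset ℕ) (hJ : J ⊆ range d) (hJ' : J' ⊆ range s) :
    J ∪ J'.image (· + d) ⊆ range (d + s) := by
  intro i hi; simp only [mem_union, mem_image] at hi
  rcases hi with h | ⟨a, ha, rfl⟩
  · have := hJ h; simp at this ⊢; omega
  · have := hJ' ha; simp at this ⊢; omega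

lemma recombine (d s : ℕ) (I : Finset ℕ) (hI : I ⊆ range (d + s)) :
    I.filter (· < d) ∪ ((I.filter (d ≤ ·)).image (· - d)).image (· + d) = I := by
  rw [Finset.image_image]
  ext i; simp only [mem_union, mem_filter, mem_image, Function.comp_apply]
  constructor
  · rintro (⟨h, _⟩ | ⟨a, ⟨ha, hge⟩, rfl⟩)
    · exact h
    · rwa [Nat.sub_add_cancel hge]
  · intro h
    by_cases hd : i < d
    · exact Or.inl ⟨h, hd⟩
    · exact Or.inr ⟨i, ⟨h, by omega⟩, by omega⟩

lemma compl_low (d s : ℕ) (I : Finset ℕ) :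
    (range (d + s) \ I).filter (· < d) = range d \ I.filter (· < d) := by
  ext i; simp only [mem_filter, mem_sdiff, mem_range]
  constructor
  · rintro ⟨⟨h1, h2⟩, h3⟩; exact ⟨h3, fun hc => h2 hc.1⟩
  · rintro ⟨h1, h2⟩; exact ⟨⟨by omega, fun hc => h2 ⟨hc, h1⟩⟩, h1⟩

lemma compl_high (d s : ℕ) (I : Finset ℕ) :
    ((range (d + s) \ I).filter (d ≤ ·)).image (· - d)
      = range s \ (I.filter (d ≤ ·)).image (· - d) := by
  ext i; simp only [mem_image, mem_filter, mem_sdiff, mem_range]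
  constructor
  · rintro ⟨j, ⟨⟨hj, hnj⟩, hge⟩, rfl⟩
    refine ⟨by omega, ?_⟩
    rintro ⟨a, ⟨ha, hage⟩, he⟩
    have : a = j := by omega
    exact hnj (this ▸ ha)
  · rintro ⟨hi, hni⟩
    refine ⟨i + d, ⟨⟨by omega, fun hc => hni ⟨i + d, ⟨hc, by omega⟩, by omega⟩⟩, by omega⟩, by omega⟩

lemma powerset_split {M : Type*} [AddCommMonoid M] (d s : ℕ) (F : Finset ℕ → Finset ℕ → M) :
    ∑ I ∈ (range (d + s)).powerset, F (I.filter (· < d)) ((I.filter (d ≤ ·)).image (· - d))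
      = ∑ J ∈ (range d).powerset, ∑ J' ∈ (range s).powerset, F J J' := by
  rw [← Finset.sum_product']
  refine Finset.sum_nbij' (fun I => (I.filter (· < d), (I.filter (d ≤ ·)).image (· - d)))
    (fun p => p.1 ∪ p.2.image (· + d)) ?_ ?_ ?_ ?_ ?_
  · intro I hI; simp only [mem_powerset] at hI
    simp only [Finset.mem_product, mem_powerset]
    constructor
    · intro i hi; simp only [mem_filter] at hi; simp [hi.2]
    · intro i hi; simp only [mem_image, mem_filter] at hi
      obtain ⟨j, ⟨hj, hge⟩, rfl⟩ := hi
      have := hI hj; simp at this ⊢; omega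
  · intro p hp; simp only [Finset.mem_product, mem_powerset] at hp
    simp only [mem_powerset]
    exact union_subset_range d s _ _ hp.1 hp.2
  · intro I hI; simp only [mem_powerset] at hI
    exact recombine d s I hI
  · intro p hp; simp only [Finset.mem_product, mem_powerset] at hp
    ext1
    · exact flt_union d _ _ hp.1
    · exact fge_union d _ _ hp.1
  · intro I _; rfl

/-- list of pairs (contraction along I-part, contraction along complement-part) -/
def pairList : List OT → Finset ℕ → List (OT × OT)
  | [], _ => []
  | t :: ts, I =>
      (contractO t (I.filter (· < degO t)),
       contractO t (Finset.range (degO t) \ I.filter (· < degO t))) ::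
        pairList ts ((I.filter fun j => degO t ≤ j).image fun j => j - degO t)

lemma pairList_map_fst (ts : List OT) (I : Finset ℕ) :
    (pairList ts I).map Prod.fst = contractList ts I := by
  induction ts generalizing I with
  | nil => rfl
  | cons t ts ih => rw [pairList, contractList, List.map_cons, ih]

lemma pairList_map_snd (ts : List OT) (I : Finset ℕ) (hI : I ⊆ Finset.range ((ts.map degO).sum)) :
    (pairList ts I).map Prod.snd
      = contractList ts (Finset.range ((ts.map degO).sum) \ I) := by
  induction ts generalizing I with
  | nil => rfl
  | cons t ts ih =>
      rw [pairList, contractList, List.map_cons]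
      have hsum : ((t :: ts).map degO).sum = degO t + (ts.map degO).sum := by simp
      congr 1
      · congr 1
        rw [hsum, compl_low (degO t) ((ts.map degO).sum) I]
      · rw [hsum, compl_high (degO t) ((ts.map degO).sum) I]
        apply ih
        intro i hi
        simp only [Finset.mem_image, Finset.mem_filter] at hi
        obtain ⟨j, ⟨hj, hge⟩, rfl⟩ := hi
        have := hI hj
        rw [hsum] at this
        simp only [Finset.mem_range] at this ⊢
        omega

section Alg
variable (K : Type) [Field K]

lemma sum_finsetsum_single {ι α M : Type*} [AddCommMonoid M] (s : Finset ι) (k : ι → α)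
    (c : ι → K) (G : α → K → M) (h0 : ∀ p, G p 0 = 0)
    (hadd : ∀ p a b, G p (a + b) = G p a + G p b) :
    (∑ i ∈ s, Finsupp.single (k i) (c i)).sum G = ∑ i ∈ s, G (k i) (c i) := by
  rw [← Finsupp.sum_finsetSum_index h0 hadd]
  exact Finset.sum_congr rfl fun i _ => Finsupp.sum_single_index (h0 _)

lemma listProd_nil {σ : Type} : listProd K ([] : List (σ →₀ K)) = Finsupp.single [] 1 := rfl

lemma listProd_cons {σ : Type} (f : σ →₀ K) (fs : List (σ →₀ K)) :
    listProd K (f :: fs)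
      = f.sum fun t a => (listProd K fs).sum fun ts b => Finsupp.single (t :: ts) (a * b) := rfl

lemma DeltaM_eq (T : OT) : DeltaM K T = ∑ I ∈ (Finset.range (degO T)).powerset,
    Finsupp.single (contractO T I, contractO T (Finset.range (degO T) \ I)) 1 := rfl

lemma listProd_deltaM (ts : List OT) :
    listProd K (ts.map (DeltaM K)) =
      ∑ I ∈ (Finset.range ((ts.map degO).sum)).powerset,
        Finsupp.single (pairList ts I) (1 : K) := by
  induction ts with
  | nil => simp [listProd_nil]; rfl
  | cons t ts ih =>
      rw [List.map_cons, listProd_cons, DeltaM_eq, ih]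
      rw [sum_finsetsum_single K _ _ _ _
        (fun p => by simp)
        (fun p a b => by simp only [add_mul, Finsupp.single_add, Finsupp.sum_add])]
      rw [Finset.sum_congr rfl (fun J _ => sum_finsetsum_single K _ _ _
        (fun ps b => Finsupp.single ((contractO t J, contractO t (Finset.range (degO t) \ J)) :: ps) (1 * b))
        (fun ps => by simp)
        (fun ps a b => by simp only [mul_add, Finsupp.single_add]))]
      have hsum : ((t :: ts).map degO).sum = degO t + (ts.map degO).sum := by simp
      rw [hsum]
      rw [show (∑ I ∈ (Finset.range (degO t + (ts.map degO).sum)).powerset,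
            Finsupp.single (pairList (t :: ts) I) (1:K))
          = ∑ J ∈ (Finset.range (degO t)).powerset,
              ∑ J' ∈ (Finset.range ((ts.map degO).sum)).powerset,
                Finsupp.single ((contractO t J, contractO t (Finset.range (degO t) \ J))
                  :: pairList ts J') (1:K) from by
        rw [← powerset_split (degO t) ((ts.map degO).sum)
          (fun J J' => Finsupp.single
            ((contractO t J, contractO t (Finset.range (degO t) \ J)) :: pairList ts J') (1 : K))]
        exact Finset.sum_congr rfl fun I _ => by rw [pairList]]
      simp

lemma deltaM_grO (ts : List OT) :
    ((listProd K (ts.map (DeltaM K))).sum fun ps d => Finsupp.single (grPair ps) d)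
      = DeltaM K (grO ts) := by
  rw [listProd_deltaM, sum_finsetsum_single K _ _ _
      (fun ps d => Finsupp.single (grPair ps) d)
      (fun ps => by simp) (fun ps a b => by simp [Finsupp.single_add])]
  rw [DeltaM_eq, degO_grO]
  apply Finset.sum_congr rfl
  intro I hI
  rw [Finset.mem_powerset] at hI
  congr 1
  rw [grPair, pairList_map_fst, pairList_map_snd ts I hI,
    contractO_grO ts I hI, contractO_grO ts _ Finset.sdiff_subset]

lemma Delta_eq (f : AMod K) : Delta K f = ∑ T ∈ f.support, (f T) • DeltaM K T := rfl

lemma listProd_map_delta (fs : List (AMod K)) :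
    listProd K (fs.map (Delta K))
      = (listProd K fs).sum fun ts c => c • listProd K (ts.map (DeltaM K)) := by
  induction fs with
  | nil =>
      rw [List.map_nil, listProd_nil, listProd_nil,
        Finsupp.sum_single_index (by rw [zero_smul])]
      rw [one_smul]; rfl
  | cons f fs ih =>
      rw [List.map_cons, listProd_cons, listProd_cons, ih, Delta_eq]
      -- normalize LHS
      rw [← Finsupp.sum_finsetSum_index
        (fun p => by simp)
        (fun p a b => by simp only [add_mul, Finsupp.single_add, Finsupp.sum_add])]
      calc
        ∑ T ∈ f.support,
            ((f T • DeltaM K T).sum fun p a =>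
              ((listProd K fs).sum fun ts c => c • listProd K (ts.map (DeltaM K))).sum
                fun ps b => Finsupp.single (p :: ps) (a * b))
          = ∑ T ∈ f.support, ∑ ts ∈ (listProd K fs).support,
              ((f T * (listProd K fs) ts) •
                (listProd K ((T :: ts).map (DeltaM K)))) := by
            apply Finset.sum_congr rfl
            intro T _
            rw [Finsupp.sum_smul_index (fun p => by simp)]
            rw [show ((listProd K fs).sum fun ts c => c • listProd K (ts.map (DeltaM K)))
              = ∑ ts ∈ (listProd K fs).support,
                  ((listProd K fs) ts) • listProd K (ts.map (DeltaM K)) from rfl]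
            -- inner: sum over big finset-sum
            have hinner : ∀ (a : K) (p : OT × OT),
                ((∑ ts ∈ (listProd K fs).support,
                  ((listProd K fs) ts) • listProd K (ts.map (DeltaM K))).sum
                    fun ps b => Finsupp.single (p :: ps) (a * b))
                = ∑ ts ∈ (listProd K fs).support,
                    ((listProd K (ts.map (DeltaM K))).sum
                      fun ps b => Finsupp.single (p :: ps) (a * ((listProd K fs) ts * b))) := by
              intro a p
              rw [← Finsupp.sum_finsetSum_index
                (fun ps => by simp)
                (fun ps b c => by simp only [mul_add, Finsupp.single_add])]
              exact Finset.sum_congr rfl fun ts _ =>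
                Finsupp.sum_smul_index (fun ps => by simp)
            refine Eq.trans (Finsupp.sum_congr (g2 := fun p a =>
                ∑ ts ∈ (listProd K fs).support,
                  ((listProd K (ts.map (DeltaM K))).sum
                    fun ps b => Finsupp.single (p :: ps) (f T * a * ((listProd K fs) ts * b))))
              (fun p _ => hinner (f T * (DeltaM K T) p) p)) ?_
            -- swap the order of summation
            rw [Finsupp.sum, Finset.sum_comm]
            refine Finset.sum_congr rfl fun ts _ => ?_
            rw [show ((T :: ts).map (DeltaM K)) = DeltaM K T :: ts.map (DeltaM K) from rfl,
              listProd_cons]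
            rw [Finsupp.smul_sum]
            rw [Finsupp.sum]
            refine Finset.sum_congr rfl fun p _ => ?_
            rw [Finsupp.smul_sum]
            refine Finsupp.sum_congr fun ps _ => ?_
            rw [Finsupp.smul_single]
            congr 1
            rw [smul_eq_mul]
            ring
        _ = _ := by
            symm
            rw [show (Finsupp.sum f fun t a => (listProd K fs).sum fun ts b =>
                  Finsupp.single (t :: ts) (a * b))
                = ∑ T ∈ f.support, ∑ ts ∈ (listProd K fs).support,
                    Finsupp.single (T :: ts) (f T * (listProd K fs) ts) from rfl]
            rw [← Finsupp.sum_finsetSum_index (fun us => by rw [zero_smul])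
              (fun us a b => by rw [add_smul])]
            refine Finset.sum_congr rfl fun T _ => ?_
            rw [← Finsupp.sum_finsetSum_index (fun us => by rw [zero_smul])
              (fun us a b => by rw [add_smul])]
            refine Finset.sum_congr rfl fun ts _ => ?_
            rw [Finsupp.sum_single_index (by rw [zero_smul])]

lemma delta_grF (fs : List (AMod K)) :
    Delta K (grF K fs) = grB K (fs.map (Delta K)) := by
  have hL : Delta K (grF K fs) = ∑ ts ∈ (listProd K fs).support,
      ((listProd K fs) ts) • DeltaM K (grO ts) := by
    rw [show Delta K (grF K fs)
        = ((∑ ts ∈ (listProd K fs).support,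
            Finsupp.single (grO ts) ((listProd K fs) ts)).sum fun T a => a • DeltaM K T)
          from rfl]
    rw [← Finsupp.sum_finsetSum_index (fun T => by rw [zero_smul]) (fun T a b => by rw [add_smul])]
    exact Finset.sum_congr rfl fun ts _ => Finsupp.sum_single_index (by rw [zero_smul])
  have hR : grB K (fs.map (Delta K)) = ∑ ts ∈ (listProd K fs).support,
      ((listProd K fs) ts) • DeltaM K (grO ts) := by
    rw [grB, mulExt, listProd_map_delta]
    rw [show (((listProd K fs).sum fun ts c => c • listProd K (ts.map (DeltaM K))).sum
          fun ps c => Finsupp.single (grPair ps) c)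
        = ((∑ ts ∈ (listProd K fs).support,
            ((listProd K fs) ts) • listProd K (ts.map (DeltaM K))).sum
          fun ps c => Finsupp.single (grPair ps) c) from rfl]
    rw [← Finsupp.sum_finsetSum_index (fun ps => by simp) (fun ps a b => by simp)]
    refine Finset.sum_congr rfl fun ts _ => ?_
    rw [Finsupp.sum_smul_index (fun ps => by simp)]
    rw [← deltaM_grO K ts, Finsupp.smul_sum]
    refine Finsupp.sum_congr fun ps _ => ?_
    rw [Finsupp.smul_single, smul_eq_mul]
  rw [hL, hR]

lemma delta_single (T : OT) : Delta K (Finsupp.single T 1) = DeltaM K T := by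
  rw [show Delta K (Finsupp.single T 1)
      = (Finsupp.single T (1:K)).sum (fun S a => a • DeltaM K S) from rfl]
  exact (Finsupp.sum_single_index (by rw [zero_smul])).trans (one_smul K (DeltaM K T))

lemma part1a : Delta K (Finsupp.single (none : OT) 1)
    = Finsupp.single ((none : OT), (none : OT)) 1 := by
  rw [delta_single, DeltaM_eq]
  rw [show degO none = 0 from rfl]
  simp only [Finset.range_zero, Finset.powerset_empty, Finset.sum_singleton]
  rfl

lemma deg_x : PTree.x.deg = 1 := by rw [PTree.x, deg_node]; simp

lemma contract_x : PTree.contract PTree.x {0} = some PTree.x := by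
  rw [PTree.contract, if_neg (by simp)]
  congr 1
  rw [show PTree.x.sub {0} = PTree.x from by rw [PTree.x, sub_node, subList_nil]]
  rw [PTree.x, red_node_ne_one [] (by simp), List.map_nil]

lemma part1b : Delta K (Finsupp.single (some PTree.x) 1)
    = Finsupp.single ((some PTree.x : OT), (none : OT)) 1
        + Finsupp.single ((none : OT), (some PTree.x : OT)) 1 := by
  rw [delta_single, DeltaM_eq]
  rw [show degO (some PTree.x) = 1 from deg_x]
  rw [Finset.range_one,
    show ({0} : Finset ℕ).powerset = insert ∅ {{0}} from by decide]
  rw [Finset.sum_insert (by decide), Finset.sum_singleton]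
  have h0 : contractO (some PTree.x) ∅ = none := by
    show PTree.contract PTree.x ∅ = none
    rw [PTree.contract, if_pos rfl]
  have h1 : contractO (some PTree.x) ({0} \ ∅) = some PTree.x := by
    rw [Finset.sdiff_empty]; exact contract_x
  have h2 : contractO (some PTree.x) ({0} \ {0}) = none := by
    rw [Finset.sdiff_self]
    show PTree.contract PTree.x ∅ = none
    rw [PTree.contract, if_pos rfl]
  have h3 : contractO (some PTree.x) {0} = some PTree.x := contract_x
  rw [h0, h1, h2, h3]
  rw [add_comm]

lemma part4 (f : AMod K) (hf : suppRed K f) (V W : OT) :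
    Delta K f (V, W) = ∑ᶠ (T : OT) (_ : ROT T), f T * (Ncount V W T : K) := by
  classical
  have hDM : ∀ T : OT, (DeltaM K T) (V, W) = (Ncount V W T : K) := by
    intro T
    rw [DeltaM_eq, Finset.sum_apply']
    simp only [Finsupp.single_apply]
    rw [Finset.sum_boole]
    congr 1
    rw [Ncount, NFinset]
    congr 1
    apply Finset.filter_congr
    intro I _
    rw [Prod.mk.injEq]
  rw [finsum_cond_eq_sum_of_cond_iff _
    (fun {T} h => ⟨fun _ => Finsupp.mem_support_iff.mpr (fun h0 => h (by rw [h0, zero_mul])),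
      fun hT => hf T hT⟩)]
  rw [Delta_eq, Finset.sum_apply']
  refine Finset.sum_congr rfl fun T _ => ?_
  rw [Finsupp.smul_apply, hDM, smul_eq_mul]

end Alg

/-- For the co-addition `Δ` on the free `K`-module on `PRT'`:
(i) `Δ(1) = (1,1)` and `Δ(x) = (x,1) + (1,x)`;
(ii) `Δ(gr(f_1,…,f_m)) = gr(Δ(f_1),…,Δ(f_m))` for `m ≥ 2`;
(iii) `c_{V,W}(Δ(f)) = Σ_{T ∈ PRT'} c_T(f)·#N_{V,W}(T)`. -/
theorem delta_properties (K : Type) [Field K] :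
    Delta K (Finsupp.single (none : OT) 1)
        = Finsupp.single ((none : OT), (none : OT)) 1 ∧
      Delta K (Finsupp.single (some PTree.x) 1)
        = Finsupp.single ((some PTree.x : OT), (none : OT)) 1
            + Finsupp.single ((none : OT), (some PTree.x : OT)) 1 ∧
      (∀ fs : List (AMod K), 2 ≤ fs.length → (∀ f ∈ fs, suppRed K f) →
        Delta K (grF K fs) = grB K (fs.map (Delta K))) ∧
      (∀ f : AMod K, suppRed K f → ∀ V W : OT, ROT V → ROT W →
        Delta K f (V, W) = ∑ᶠ (T : OT) (_ : ROT T), f T * (Ncount V W T : K)) :=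
  ⟨part1a K, part1b K, fun fs _ _ => delta_grF K fs, fun f hf V W _ _ => part4 K f hf V W⟩
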